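/- Let (M,g) be smooth compact connected with first nonzero Laplacian eigenvalue λ₁ > 0 and Ricci bound |Ric| ≤ K. Then for u = (u₁, u₂) in R(Π) ∩ D(Π), where Π is the Hodge–Dirac-type operator Π = Γ + Γ* on L²(M) ⊕ L²(T*M) with Γ(u₁,u₂) = (0, ∇u₁), one has ‖∇u₁‖ + ‖∇u₂‖ + ‖u‖ ≤ C‖Πu‖, where C depends only on λ₁ and K. (Hypothesis (H8)-2 of the Axelsson–Keith–McIntosh framework for the homogeneous operator.) -/

import Mathlib

/- STATEMENT 18: Hypothesis (H8)-2 for the homogeneous Hodge–Dirac-type operator: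
on a smooth compact connected (M,g) with first nonzero Laplacian eigenvalue λ₁ > 0 and
|Ric| ≤ K, for u = (u₁,u₂) ∈ R(Π) ∩ D(Π), where Π = Γ + Γ*, Γ(u₁,u₂) = (0,∇u₁),
Γ*(u₁,u₂) = (−div u₂, 0) on L²(M) ⊕ L²(T*M), one has
‖∇u₁‖ + ‖∇u₂‖ + ‖u‖ ≤ C‖Πu‖ with C depending only on λ₁ and K.
Abstracted: H1 = L²(M), H2 = L²(T*M), K2 = L²(T*M ⊗ T*M); grad = ∇ closed densely
defined, div = −∇* (same norms), grad2 = the connection ∇ on 1-forms; λ₁ enters via the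
Poincaré inequality and K via the Bochner–Weitzenböck inequality, both hypotheses. -/

open scoped InnerProductSpace

private lemma sqrt_bound {x c t : ℝ} (hx : 0 ≤ x) (hc : 0 ≤ c) (h : x ^ 2 ≤ c * t) :
    x ≤ Real.sqrt c * Real.sqrt t := by
  rw [← Real.sqrt_mul hc]
  calc x = Real.sqrt (x ^ 2) := (Real.sqrt_sq hx).symm
    _ ≤ _ := Real.sqrt_le_sqrt h

private lemma ker_closed {H1 H2 : Type*}
    [NormedAddCommGroup H1] [InnerProductSpace ℝ H1] [CompleteSpace H1]
    [NormedAddCommGroup H2] [InnerProductSpace ℝ H2] [CompleteSpace H2]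
    (grad : H1 →ₗ.[ℝ] H2) (hclosed : grad.IsClosed) :
    IsClosed (((LinearMap.ker grad.toFun).map grad.domain.subtype : Submodule ℝ H1) : Set H1) := by
  rw [← isSeqClosed_iff_isClosed]
  intro xs x hxs hlim
  have hmem : (x, (0:H2)) ∈ grad.graph := by
    refine hclosed.mem_of_tendsto (Filter.Tendsto.prodMk_nhds hlim tendsto_const_nhds)
      (Filter.Eventually.of_forall fun n => ?_)
    obtain ⟨k, hk, hkx⟩ := hxs n
    rw [SetLike.mem_coe, LinearPMap.mem_graph_iff]
    exact ⟨⟨xs n, hkx ▸ k.2⟩, rfl, by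
      have : grad ⟨xs n, hkx ▸ k.2⟩ = grad k := by congr 1; exact Subtype.ext hkx.symm
      rw [this]; exact hk⟩
  rw [LinearPMap.mem_graph_iff] at hmem
  obtain ⟨y, hy1, hy2⟩ := hmem
  exact ⟨y, hy2, hy1⟩

theorem stmt18 {H1 H2 K2 : Type*}
    [NormedAddCommGroup H1] [InnerProductSpace ℝ H1] [CompleteSpace H1]
    [NormedAddCommGroup H2] [InnerProductSpace ℝ H2] [CompleteSpace H2]
    [NormedAddCommGroup K2] [InnerProductSpace ℝ K2] [CompleteSpace K2]
    (grad : H1 →ₗ.[ℝ] H2) (hdense : Dense (grad.domain : Set H1)) (hclosed : grad.IsClosed)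
    (grad2 : H2 →ₗ.[ℝ] K2)
    (lam1 Kb : ℝ) (hlam1 : 0 < lam1) (hKb : 0 ≤ Kb)
    (hPoincare : ∀ u : grad.domain,
      (u : H1) ∈ ((LinearMap.ker grad.toFun).map grad.domain.subtype)ᗮ →
      lam1 * ‖(u : H1)‖ ^ 2 ≤ ‖grad u‖ ^ 2)
    (hBochner : ∀ (v : grad.domain) (h : grad v ∈ grad.adjoint.domain),
      ∃ hm : grad v ∈ grad2.domain,
        ‖grad2 ⟨grad v, hm⟩‖ ^ 2 ≤ ‖grad.adjoint ⟨grad v, h⟩‖ ^ 2 + Kb * ‖grad v‖ ^ 2) :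
    ∃ C : ℝ, 0 < C ∧
      ∀ (u₁ : H1) (u₂ : H2) (h₁ : u₁ ∈ grad.domain) (h₂ : u₂ ∈ grad.adjoint.domain),
        u₁ ∈ LinearMap.range grad.adjoint.toFun →
        u₂ ∈ LinearMap.range grad.toFun →
        ∃ h₂₂ : u₂ ∈ grad2.domain,
          ‖grad ⟨u₁, h₁⟩‖ + ‖grad2 ⟨u₂, h₂₂⟩‖ + Real.sqrt (‖u₁‖ ^ 2 + ‖u₂‖ ^ 2) ≤
            C * Real.sqrt (‖grad.adjoint ⟨u₂, h₂⟩‖ ^ 2 + ‖grad ⟨u₁, h₁⟩‖ ^ 2) := by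
  classical
  set N : Submodule ℝ H1 := (LinearMap.ker grad.toFun).map grad.domain.subtype with hNdef
  have hNclosed : IsClosed (N : Set H1) := ker_closed grad hclosed
  haveI : CompleteSpace N := hNclosed.completeSpace_coe
  have hfa : grad.adjoint.IsFormalAdjoint grad := grad.adjoint_isFormalAdjoint hdense
  refine ⟨1 + Real.sqrt (1 + Kb / lam1) + Real.sqrt (1 / lam1), by positivity, ?_⟩
  intro u₁ u₂ h₁ h₂ hr₁ hr₂
  obtain ⟨v₀, hv₀⟩ := hr₂
  obtain ⟨z, hz⟩ := hr₁
  set a := ‖grad.adjoint ⟨u₂, h₂⟩‖ with ha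
  set b := ‖grad ⟨u₁, h₁⟩‖ with hb
  have ha0 : 0 ≤ a := ha ▸ norm_nonneg _
  have hb0 : 0 ≤ b := hb ▸ norm_nonneg _
  clear_value a b
  -- construct w with grad w = u₂, w ⊥ N
  obtain ⟨k, hk, hkp⟩ := (N.orthogonalProjectionOnto (v₀ : H1)).2
  set w : grad.domain := v₀ - k with hw
  have hwperp : (w : H1) ∈ Nᗮ := by
    have h := Submodule.sub_starProjection_mem_orthogonal (K := N) (v₀ : H1)
    rwa [show ((w : H1)) = (v₀ : H1) - (N.orthogonalProjectionOnto (v₀ : H1) : H1) by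
      rw [hw]; push_cast; rw [← hkp]; rfl]
  have hgw : grad w = u₂ := by
    rw [hw, LinearPMap.map_sub]
    have hk0 : grad k = 0 := hk
    rw [hk0, sub_zero]
    exact hv₀
  -- ‖w‖ bound via Poincaré
  have hPw : lam1 * ‖(w : H1)‖ ^ 2 ≤ ‖u₂‖ ^ 2 := by
    have := hPoincare w hwperp
    rwa [hgw] at this
  -- pairing: ‖u₂‖² ≤ a * ‖w‖
  have hpair : ‖u₂‖ ^ 2 ≤ a * ‖(w : H1)‖ := by
    have h1 : ⟪grad.adjoint ⟨u₂, h₂⟩, (w : H1)⟫_ℝ = ⟪u₂, grad w⟫_ℝ := hfa ⟨u₂, h₂⟩ w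
    rw [hgw] at h1
    calc ‖u₂‖ ^ 2 = ⟪u₂, u₂⟫_ℝ := (real_inner_self_eq_norm_sq u₂).symm
      _ = ⟪grad.adjoint ⟨u₂, h₂⟩, (w : H1)⟫_ℝ := h1.symm
      _ ≤ ‖grad.adjoint ⟨u₂, h₂⟩‖ * ‖(w : H1)‖ := real_inner_le_norm _ _
      _ = a * ‖(w : H1)‖ := by rw [ha]
  -- ‖u₂‖² ≤ a²/lam1
  have hu2 : lam1 * ‖u₂‖ ^ 2 ≤ a ^ 2 := by
    rcases eq_or_lt_of_le (norm_nonneg u₂) with h0 | h0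
    · rw [← h0]; simpa using sq_nonneg a
    · have h4 : ‖u₂‖ ^ 2 * ‖u₂‖ ^ 2 ≤ (a * ‖(w : H1)‖) * (a * ‖(w : H1)‖) :=
        mul_self_le_mul_self (sq_nonneg _) hpair
      have hq : lam1 * ‖u₂‖ ^ 2 * ‖u₂‖ ^ 2 ≤ a ^ 2 * ‖u₂‖ ^ 2 := by
        nlinarith [mul_le_mul_of_nonneg_left h4 hlam1.le,
          mul_le_mul_of_nonneg_left hPw (sq_nonneg a)]
      exact le_of_mul_le_mul_right hq (by positivity)
  -- u₁ ⊥ N and Poincaré for u₁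
  have hu1perp : u₁ ∈ Nᗮ := by
    rw [Submodule.mem_orthogonal]
    rintro v ⟨q, hq, rfl⟩
    have h1 := hfa z q
    have hq0 : grad q = 0 := hq
    rw [hq0, inner_zero_right] at h1
    have hz' : grad.adjoint z = u₁ := hz
    rw [Submodule.subtype_apply, real_inner_comm, ← hz']
    exact h1
  have hPu1 : lam1 * ‖u₁‖ ^ 2 ≤ b ^ 2 := hb ▸ hPoincare ⟨u₁, h₁⟩ hu1perp
  -- Bochner
  have hwa : grad w ∈ grad.adjoint.domain := hgw ▸ h₂
  obtain ⟨hm, hest⟩ := hBochner w hwa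
  have h₂₂ : u₂ ∈ grad2.domain := hgw ▸ hm
  have heq1 : (⟨grad w, hm⟩ : grad2.domain) = ⟨u₂, h₂₂⟩ := Subtype.ext hgw
  have heq2 : (⟨grad w, hwa⟩ : grad.adjoint.domain) = ⟨u₂, h₂⟩ := Subtype.ext hgw
  rw [heq1, heq2, hgw, ← ha] at hest
  refine ⟨h₂₂, ?_⟩
  clear_value w
  clear heq1 heq2 hwa hm hfa hwperp hgw hPw hpair hw w hkp hk k hz z hv₀ v₀ hu1perp
    hNclosed hPoincare hBochner hclosed hdense
  -- term 1
  have t1 : b ≤ Real.sqrt (a ^ 2 + b ^ 2) := by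
    calc b = Real.sqrt (b ^ 2) := (Real.sqrt_sq hb0).symm
      _ ≤ _ := Real.sqrt_le_sqrt (by nlinarith)
  -- term 2
  have t2 : ‖grad2 ⟨u₂, h₂₂⟩‖ ≤ Real.sqrt (1 + Kb / lam1) * Real.sqrt (a ^ 2 + b ^ 2) := by
    refine sqrt_bound (norm_nonneg _) (by positivity) ?_
    have hKl : (0:ℝ) ≤ Kb / lam1 := div_nonneg hKb hlam1.le
    have h5 : Kb * ‖u₂‖ ^ 2 ≤ (Kb / lam1) * a ^ 2 := by
      rw [div_mul_eq_mul_div, le_div_iff₀ hlam1]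
      calc Kb * ‖u₂‖ ^ 2 * lam1 = Kb * (lam1 * ‖u₂‖ ^ 2) := by ring
        _ ≤ Kb * a ^ 2 := mul_le_mul_of_nonneg_left hu2 hKb
    nlinarith [hest, sq_nonneg b]
  -- term 3
  have t3 : Real.sqrt (‖u₁‖ ^ 2 + ‖u₂‖ ^ 2)
      ≤ Real.sqrt (1 / lam1) * Real.sqrt (a ^ 2 + b ^ 2) := by
    rw [← Real.sqrt_mul (by positivity)]
    refine Real.sqrt_le_sqrt ?_
    have e1 : ‖u₁‖ ^ 2 ≤ b ^ 2 / lam1 := by rw [le_div_iff₀ hlam1]; nlinarith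
    have e2 : ‖u₂‖ ^ 2 ≤ a ^ 2 / lam1 := by rw [le_div_iff₀ hlam1]; nlinarith
    calc ‖u₁‖ ^ 2 + ‖u₂‖ ^ 2 ≤ b ^ 2 / lam1 + a ^ 2 / lam1 := add_le_add e1 e2
      _ = 1 / lam1 * (a ^ 2 + b ^ 2) := by ring
  calc b + ‖grad2 ⟨u₂, h₂₂⟩‖ + Real.sqrt (‖u₁‖ ^ 2 + ‖u₂‖ ^ 2)
      ≤ Real.sqrt (a ^ 2 + b ^ 2) + Real.sqrt (1 + Kb / lam1) * Real.sqrt (a ^ 2 + b ^ 2)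
        + Real.sqrt (1 / lam1) * Real.sqrt (a ^ 2 + b ^ 2) :=
        add_le_add (add_le_add t1 t2) t3
    _ = (1 + Real.sqrt (1 + Kb / lam1) + Real.sqrt (1 / lam1)) * Real.sqrt (a ^ 2 + b ^ 2) := by
        ring
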